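/- Let I = [a,b] be a compact interval in R and f: I → I a continuous increasing function with f(a) = a, f(b) = b, and f(x) ≠ x for all x ∈ (a,b). Then h_pol(f) = 1. -/

import Mathlib

open Filter Metric Set Topology

variable {Z : Type*} [MetricSpace Z]

/-- The dynamical metric `d_n^f(x,y) = max_{0 ≤ k ≤ n-1} d(f^k x, f^k y)`. -/
noncomputable def dynDist (f : Z → Z) (n : ℕ) (x y : Z) : ℝ :=
  ((Finset.range n).sup fun k => nndist (f^[k] x) (f^[k] y) : NNReal)

/-- `G_n^f(Y,ε)`: the minimal number of balls of radius `ε` for the metric `d_n^f`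
needed to cover `Y`. -/
noncomputable def coverNum (f : Z → Z) (n : ℕ) (Y : Set Z) (ε : ℝ) : ℕ :=
  sInf {m : ℕ | ∃ s : Finset Z, s.card = m ∧
    Y ⊆ ⋃ c ∈ s, {y : Z | dynDist f n c y ≤ ε}}

/-- The polynomial entropy of `f` on `Y`:
`h_pol(f,Y) = lim_{ε→0} limsup_{n→∞} log G_n^f(Y,ε) / log n`
(realized, by antitonicity in `ε`, as the supremum over `ε > 0`). -/
noncomputable def hpolOn (f : Z → Z) (Y : Set Z) : EReal :=
  ⨆ ε : {e : ℝ // 0 < e}, Filter.atTop.limsup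
    (fun n : ℕ => ((Real.log (coverNum f n Y ε.1) / Real.log n : ℝ) : EReal))

/-- The polynomial entropy of `f`. -/
noncomputable def hpol (f : Z → Z) : EReal := hpolOn f Set.univ

/-! ### Auxiliary lemmas on `dynDist` and `coverNum` -/

lemma HpolAux.dynDist_nonneg (f : Z → Z) (n : ℕ) (x y : Z) : 0 ≤ dynDist f n x y :=
  NNReal.coe_nonneg _

lemma HpolAux.dist_iterate_le_dynDist (f : Z → Z) {n k : ℕ} (hk : k < n) (x y : Z) :
    dist (f^[k] x) (f^[k] y) ≤ dynDist f n x y := by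
  rw [dist_nndist]
  exact_mod_cast Finset.le_sup (f := fun k => nndist (f^[k] x) (f^[k] y))
    (Finset.mem_range.mpr hk)

lemma HpolAux.dynDist_le_iff {f : Z → Z} {n : ℕ} {x y : Z} {ε : ℝ} (hε : 0 ≤ ε) :
    dynDist f n x y ≤ ε ↔ ∀ k < n, dist (f^[k] x) (f^[k] y) ≤ ε := by
  constructor
  · intro h k hk
    exact (HpolAux.dist_iterate_le_dynDist f hk x y).trans h
  · intro h
    rw [dynDist, ← Real.coe_toNNReal ε hε, NNReal.coe_le_coe]
    apply Finset.sup_le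
    intro k hk
    rw [← NNReal.coe_le_coe, Real.coe_toNNReal ε hε, coe_nndist]
    exact h k (Finset.mem_range.mp hk)

lemma HpolAux.dynDist_comm (f : Z → Z) (n : ℕ) (x y : Z) :
    dynDist f n x y = dynDist f n y x := by
  unfold dynDist
  congr 1
  exact Finset.sup_congr rfl fun k _ => nndist_comm _ _

lemma HpolAux.dynDist_triangle (f : Z → Z) (n : ℕ) (x y z : Z) :
    dynDist f n x z ≤ dynDist f n x y + dynDist f n y z := by
  rcases Nat.eq_zero_or_pos n with rfl | hn
  · simp [dynDist]
  rw [HpolAux.dynDist_le_iff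
    (add_nonneg (HpolAux.dynDist_nonneg f n x y) (HpolAux.dynDist_nonneg f n y z))]
  intro k hk
  exact (dist_triangle _ (f^[k] y) _).trans
    (add_le_add (HpolAux.dist_iterate_le_dynDist f hk x y)
      (HpolAux.dist_iterate_le_dynDist f hk y z))

lemma HpolAux.coverNum_le_card {f : Z → Z} {n : ℕ} {Y : Set Z} {ε : ℝ} {s : Finset Z}
    (h : Y ⊆ ⋃ c ∈ s, {y : Z | dynDist f n c y ≤ ε}) : coverNum f n Y ε ≤ s.card :=
  Nat.sInf_le ⟨s, rfl, h⟩

lemma HpolAux.le_coverNum {f : Z → Z} {n : ℕ} {Y : Set Z} {ε : ℝ}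
    (hne : {m : ℕ | ∃ s : Finset Z, s.card = m ∧
      Y ⊆ ⋃ c ∈ s, {y : Z | dynDist f n c y ≤ ε}}.Nonempty)
    {m : ℕ} (w : Fin m → Z) (hw : ∀ j, w j ∈ Y)
    (hsep : ∀ i j, i ≠ j → 2 * ε < dynDist f n (w i) (w j)) :
    m ≤ coverNum f n Y ε := by
  apply le_csInf hne
  rintro t ⟨s, rfl, hcov⟩
  have : ∀ j : Fin m, ∃ c ∈ s, dynDist f n c (w j) ≤ ε := by
    intro j
    have := hcov (hw j)
    simpa using this
  choose c hcs hcd using this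
  have hinj : Function.Injective c := by
    intro i j hij
    by_contra hne'
    have h1 := HpolAux.dynDist_triangle f n (w i) (c i) (w j)
    rw [HpolAux.dynDist_comm f n (w i) (c i)] at h1
    have h2 : dynDist f n (c i) (w j) ≤ ε := by rw [hij]; exact hcd j
    have : dynDist f n (w i) (w j) ≤ 2 * ε := by linarith [hcd i, h1]
    exact absurd (hsep i j hne') (not_lt.mpr this)
  calc m = (Finset.univ : Finset (Fin m)).card := by simp
    _ ≤ s.card := Finset.card_le_card_of_injOn c (fun j _ => hcs j) (hinj.injOn)

/-! ### Limsup computations -/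

lemma HpolAux.aux_tendsto (C : ℕ) (hC : 1 ≤ C) :
    Tendsto (fun n : ℕ => Real.log (C * n) / Real.log n) atTop (𝓝 1) := by
  have h0 : Tendsto (fun n : ℕ => (Real.log n)⁻¹) atTop (𝓝 0) :=
    (Real.tendsto_log_atTop.comp tendsto_natCast_atTop_atTop).inv_tendsto_atTop
  have h1 : Tendsto (fun n : ℕ => 1 + Real.log C * (Real.log n)⁻¹) atTop (𝓝 1) := by
    have h2 := (tendsto_const_nhds :
        Tendsto (fun _ : ℕ => (1 : ℝ)) atTop (𝓝 1)).add (h0.const_mul (Real.log C))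
    simpa using h2
  apply h1.congr'
  filter_upwards [eventually_ge_atTop 2] with n hn
  have hn1 : (1 : ℝ) < n := by exact_mod_cast Nat.lt_of_lt_of_le Nat.one_lt_two hn
  have hlogn : 0 < Real.log n := Real.log_pos hn1
  have hCne : (C : ℝ) ≠ 0 := by positivity
  have hnne : (n : ℝ) ≠ 0 := by positivity
  rw [Real.log_mul hCne hnne]
  field_simp
  ring

lemma HpolAux.limsup_ratio_le_one (u : ℕ → ℕ) (C : ℕ) (hC : 1 ≤ C)
    (hub : ∀ n, 1 ≤ n → u n ≤ C * n) :
    Filter.atTop.limsup (fun n : ℕ => ((Real.log (u n) / Real.log n : ℝ) : EReal)) ≤ 1 := by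
  set v : ℕ → EReal := fun n => ((Real.log (C * n) / Real.log n : ℝ) : EReal) with hv
  have hvt : Tendsto v atTop (𝓝 (1 : EReal)) := by
    rw [hv, ← EReal.coe_one]
    exact (EReal.tendsto_coe).mpr (HpolAux.aux_tendsto C hC)
  have hvl : Filter.atTop.limsup v = 1 := hvt.limsup_eq
  have hle : (fun n : ℕ => ((Real.log (u n) / Real.log n : ℝ) : EReal)) ≤ᶠ[atTop] v := by
    filter_upwards [eventually_ge_atTop 2] with n hn
    have hn1 : (1 : ℝ) < n := by exact_mod_cast Nat.lt_of_lt_of_le Nat.one_lt_two hn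
    have hlogn : 0 < Real.log n := Real.log_pos hn1
    have hCn : (1 : ℝ) ≤ (C : ℝ) * n := by
      have h3 : (1 : ℕ) ≤ C * n := Nat.one_le_iff_ne_zero.mpr (by positivity)
      exact_mod_cast h3
    have hlog : Real.log (u n) ≤ Real.log ((C : ℝ) * n) := by
      rcases Nat.eq_zero_or_pos (u n) with h | h
      · rw [h]
        simpa using Real.log_nonneg hCn
      · apply Real.log_le_log (by exact_mod_cast h)
        have h4 := hub n (by omega)
        exact_mod_cast h4
    apply EReal.coe_le_coe_iff.mpr
    exact (div_le_div_iff_of_pos_right hlogn).mpr hlog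
  rw [← hvl]
  exact Filter.limsup_le_limsup hle

lemma HpolAux.one_le_limsup_ratio (u : ℕ → ℕ) (hlb : ∀ n, 1 ≤ n → n ≤ u n) :
    (1 : EReal) ≤
      Filter.atTop.limsup (fun n : ℕ => ((Real.log (u n) / Real.log n : ℝ) : EReal)) := by
  have hle : (fun _ : ℕ => (1 : EReal)) ≤ᶠ[atTop]
      (fun n : ℕ => ((Real.log (u n) / Real.log n : ℝ) : EReal)) := by
    filter_upwards [eventually_ge_atTop 2] with n hn
    have hn1 : (1 : ℝ) < n := by exact_mod_cast Nat.lt_of_lt_of_le Nat.one_lt_two hn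
    have hlogn : 0 < Real.log n := Real.log_pos hn1
    have hlog : Real.log n ≤ Real.log (u n) := by
      apply Real.log_le_log (by linarith)
      have h4 := hlb n (by omega)
      exact_mod_cast h4
    rw [← EReal.coe_one]
    apply EReal.coe_le_coe_iff.mpr
    rw [le_div_iff₀ hlogn, one_mul]
    exact hlog
  calc (1 : EReal) = Filter.atTop.limsup (fun _ : ℕ => (1 : EReal)) :=
        (Filter.limsup_const _).symm
    _ ≤ _ := Filter.limsup_le_limsup hle

/-! ### Interval-specific lemmas -/

section Interval
variable {a b : ℝ} (hab : a < b)
  (f : Set.Icc a b → Set.Icc a b) (hfc : Continuous f) (hfm : StrictMono f)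
  (hfa : f ⟨a, Set.left_mem_Icc.mpr hab.le⟩ = ⟨a, Set.left_mem_Icc.mpr hab.le⟩)
  (hfb : f ⟨b, Set.right_mem_Icc.mpr hab.le⟩ = ⟨b, Set.right_mem_Icc.mpr hab.le⟩)
  (g : Set.Icc a b → Set.Icc a b)
  (hfg : Function.LeftInverse f g) (hgf : Function.LeftInverse g f)

include hab hfc hfa hfb in
lemma HpolAux.f_surj : Function.Surjective f := by
  intro y
  set F : ℝ → ℝ := fun x => (f (Set.projIcc a b hab.le x) : ℝ) with hF
  have hFc : Continuous F := continuous_subtype_val.comp (hfc.comp continuous_projIcc)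
  have hFa : F a = a := by simp [hF, Set.projIcc_left, hfa]
  have hFb : F b = b := by simp [hF, Set.projIcc_right, hfb]
  have key : Set.Icc a b ⊆ F '' Set.Icc a b := by
    have := intermediate_value_Icc hab.le hFc.continuousOn
    rwa [hFa, hFb] at this
  obtain ⟨x, hx, hFx⟩ := key y.2
  refine ⟨⟨x, hx⟩, ?_⟩
  apply Subtype.ext
  rw [← hFx, hF]
  simp [Set.projIcc_of_mem hab.le hx]

include hab hfm hfg in
lemma HpolAux.exists_dyn_cover {ε : ℝ} (hε : 0 < ε) :
    ∃ C : ℕ, 1 ≤ C ∧ ∀ n : ℕ, 1 ≤ n → ∃ s : Finset (Set.Icc a b),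
      s.card ≤ C * n ∧
      (Set.univ : Set (Set.Icc a b)) ⊆ ⋃ c ∈ s, {y | dynDist f n c y ≤ ε} := by
  classical
  set M : ℕ := ⌈(b - a) / ε⌉₊ with hM
  have hM1 : 1 ≤ M := Nat.one_le_iff_ne_zero.mpr (by
    simp only [hM, ne_eq, Nat.ceil_eq_zero, not_le]
    exact div_pos (by linarith) hε)
  have hMpos : (0 : ℝ) < M := by exact_mod_cast hM1
  set h : ℝ := (b - a) / M with hh
  have hhpos : 0 < h := div_pos (by linarith) hMpos
  have hhε : h ≤ ε := by
    have h1 : (b - a) / ε ≤ (M : ℝ) := Nat.le_ceil _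
    have h2 : (b - a) / ε * ε ≤ (M : ℝ) * ε := mul_le_mul_of_nonneg_right h1 hε.le
    rw [div_mul_cancel₀ _ hε.ne'] at h2
    rw [hh, div_le_iff₀ hMpos]
    linarith
  have hMh : (M : ℝ) * h = b - a := by
    rw [hh]; field_simp
  have pmem : ∀ i : ℕ, i ≤ M → a + i * h ∈ Set.Icc a b := by
    intro i hi
    constructor
    · nlinarith [hhpos.le, Nat.cast_nonneg (α := ℝ) i]
    · have : (i : ℝ) * h ≤ M * h := by
        apply mul_le_mul_of_nonneg_right _ hhpos.le
        exact_mod_cast hi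
      linarith [hMh]
  set p : ℕ → Set.Icc a b := fun i => ⟨a + (min i M) * h, pmem _ (min_le_right _ _)⟩ with hp
  have hpval : ∀ i ≤ M, (p i : ℝ) = a + i * h := by
    intro i hi
    simp [hp, min_eq_left hi, hi]
  have hp0 : p 0 = ⟨a, Set.left_mem_Icc.mpr hab.le⟩ := by
    apply Subtype.ext
    simp [hp]
  refine ⟨M + 1, le_add_self, fun n hn => ?_⟩
  set s : Finset (Set.Icc a b) :=
    (Finset.range n ×ˢ Finset.range (M + 1)).image (fun q => g^[q.1] (p q.2)) with hs
  refine ⟨s, ?_, ?_⟩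
  · calc s.card ≤ (Finset.range n ×ˢ Finset.range (M + 1)).card := Finset.card_image_le
      _ = n * (M + 1) := by simp [Finset.card_product]
      _ = (M + 1) * n := Nat.mul_comm _ _
  · intro y _
    simp only [Set.mem_iUnion, Set.mem_setOf_eq, exists_prop]
    set t : Finset (Set.Icc a b) := s.filter (fun c => c ≤ y) with ht
    have htne : t.Nonempty := by
      refine ⟨p 0, ?_⟩
      rw [ht, Finset.mem_filter]
      constructor
      · rw [hs]
        apply Finset.mem_image.mpr
        refine ⟨(0, 0), ?_, rfl⟩
        simp only [Finset.mem_product, Finset.mem_range]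
        omega
      · rw [hp0]
        exact Subtype.coe_le_coe.mp y.2.1
    set q : Set.Icc a b := t.max' htne with hq
    have hqt : q ∈ t := t.max'_mem htne
    have hqs : q ∈ s := (Finset.mem_filter.mp hqt).1
    have hqy : q ≤ y := (Finset.mem_filter.mp hqt).2
    refine ⟨q, hqs, ?_⟩
    rw [HpolAux.dynDist_le_iff hε.le]
    intro k hk
    by_contra hcon
    push_neg at hcon
    have hle : f^[k] q ≤ f^[k] y := hfm.monotone.iterate k hqy
    have hdist : dist (f^[k] q) (f^[k] y) = ((f^[k] y : ℝ)) - ((f^[k] q : ℝ)) := by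
      rw [Subtype.dist_eq, Real.dist_eq, abs_sub_comm, abs_of_nonneg (by
        simp only [sub_nonneg]; exact_mod_cast hle)]
    set u : ℝ := ((f^[k] q : Set.Icc a b) : ℝ) with hu
    set v : ℝ := ((f^[k] y : Set.Icc a b) : ℝ) with hv
    have huv : v - u > ε := by rw [hdist] at hcon; linarith
    have hua : a ≤ u := (f^[k] q).2.1
    set i : ℕ := ⌊(u - a) / h⌋₊ + 1 with hi
    have hiu : u < a + i * h := by
      have : (u - a) / h < (i : ℝ) := by
        rw [hi]; push_cast; exact Nat.lt_floor_add_one _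
      rw [hi]
      calc u = a + ((u - a) / h) * h := by field_simp; ring
        _ < a + i * h := by
            apply add_lt_add_right
            exact mul_lt_mul_of_pos_right this hhpos
    have hiv : a + i * h < v := by
      have : (i : ℝ) * h ≤ (u - a) + h := by
        rw [hi]
        push_cast
        rw [add_mul, one_mul]
        apply add_le_add_left
        calc (⌊(u - a) / h⌋₊ : ℝ) * h ≤ ((u - a) / h) * h := by
              apply mul_le_mul_of_nonneg_right _ hhpos.le
              exact Nat.floor_le (div_nonneg (by linarith) hhpos.le)
          _ = u - a := by field_simp
      linarith [hhε, huv]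
    have hiM : i ≤ M := by
      by_contra hiM
      push_neg at hiM
      have : (M : ℝ) * h < i * h := by
        apply mul_lt_mul_of_pos_right _ hhpos
        exact_mod_cast hiM
      have hvb : v ≤ b := (f^[k] y).2.2
      linarith [hMh]
    set z : Set.Icc a b := g^[k] (p i) with hz
    have hfz : f^[k] z = p i := hfg.iterate k (p i)
    have hqz : q < z := by
      have : f^[k] q < f^[k] z := by
        rw [hfz]
        apply Subtype.coe_lt_coe.mp
        rw [hpval i hiM]
        exact hiu
      exact lt_of_not_ge fun hle' => absurd ((hfm.iterate k).monotone hle') (not_le.mpr this)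
    have hzy : z < y := by
      have : f^[k] z < f^[k] y := by
        rw [hfz]
        apply Subtype.coe_lt_coe.mp
        rw [hpval i hiM]
        exact hiv
      exact (hfm.iterate k).lt_iff_lt.mp this
    have hzs : z ∈ s := by
      rw [hs]
      apply Finset.mem_image.mpr
      refine ⟨(k, i), ?_, rfl⟩
      simp only [Finset.mem_product, Finset.mem_range]
      omega
    have : z ≤ q := Finset.le_max' t z (Finset.mem_filter.mpr ⟨hzs, hzy.le⟩)
    exact absurd hqz (not_lt.mpr this)

include hab hfm hfg in
lemma HpolAux.exists_dyn_sep
    (hfix : ∀ x : Set.Icc a b, a < (x : ℝ) → (x : ℝ) < b → f x ≠ x) :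
    ∃ ε0 : ℝ, 0 < ε0 ∧ ∀ n : ℕ, ∃ w : Fin n → Set.Icc a b,
      ∀ i j : Fin n, i ≠ j → ε0 ≤ dynDist f n (w i) (w j) := by
  have hgm : StrictMono g := by
    intro x y hxy
    rcases lt_trichotomy (g x) (g y) with h' | h' | h'
    · exact h'
    · exact absurd (by rw [← hfg x, ← hfg y, h']) hxy.ne
    · exact absurd (by rw [← hfg x, ← hfg y]; exact hfm h') (not_lt.mpr hxy.le).elim
  have hcmem : (a + b) / 2 ∈ Set.Icc a b := ⟨by linarith, by linarith⟩
  set c : Set.Icc a b := ⟨(a + b) / 2, hcmem⟩ with hc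
  have hca : a < (c : ℝ) := by rw [hc]; dsimp; linarith
  have hcb : (c : ℝ) < b := by rw [hc]; dsimp; linarith
  have hgc : g c ≠ c := by
    intro h
    exact hfix c hca hcb (by nth_rewrite 1 [← h]; exact hfg c)
  set ε0 : ℝ := dist (g c) c with hε0
  have hε0pos : 0 < ε0 := dist_pos.mpr hgc
  have key : ∀ m : ℕ, 1 ≤ m → ε0 ≤ dist (g^[m] c) c := by
    rcases hgc.lt_or_gt with hlt | hlt
    · have mono : ∀ m : ℕ, g^[m + 1] c ≤ g c := by
        intro m
        induction m with
        | zero => simp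
        | succ m ih =>
          rw [Function.iterate_succ_apply']
          calc g (g^[m + 1] c) ≤ g (g c) := hgm.monotone ih
            _ ≤ g c := hgm.monotone hlt.le
      intro m hm
      obtain ⟨m', rfl⟩ := Nat.exists_eq_add_of_le hm
      have h1 : (g^[1 + m'] c : ℝ) ≤ (g c : ℝ) := by
        rw [add_comm]
        exact_mod_cast mono m'
      rw [hε0, Subtype.dist_eq, Subtype.dist_eq, Real.dist_eq, Real.dist_eq]
      have h2 : (g c : ℝ) < (c : ℝ) := hlt
      rw [abs_of_nonpos (by linarith), abs_of_nonpos (by linarith)]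
      linarith
    · have mono : ∀ m : ℕ, g c ≤ g^[m + 1] c := by
        intro m
        induction m with
        | zero => simp
        | succ m ih =>
          rw [Function.iterate_succ_apply']
          calc g c ≤ g (g c) := hgm.monotone hlt.le
            _ ≤ g (g^[m + 1] c) := hgm.monotone ih
      intro m hm
      obtain ⟨m', rfl⟩ := Nat.exists_eq_add_of_le hm
      have h1 : (g c : ℝ) ≤ (g^[1 + m'] c : ℝ) := by
        rw [add_comm]
        exact_mod_cast mono m'
      rw [hε0, Subtype.dist_eq, Subtype.dist_eq, Real.dist_eq, Real.dist_eq]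
      have h2 : (c : ℝ) < (g c : ℝ) := hlt
      rw [abs_of_nonneg (by linarith), abs_of_nonneg (by linarith)]
      linarith
  refine ⟨ε0, hε0pos, fun n => ⟨fun j => g^[(j : ℕ)] c, ?_⟩⟩
  have main : ∀ i j : Fin n, (i : ℕ) < (j : ℕ) →
      ε0 ≤ dynDist f n (g^[(i : ℕ)] c) (g^[(j : ℕ)] c) := by
    intro i j hij
    have h1 : f^[(i : ℕ)] (g^[(i : ℕ)] c) = c := (hfg.iterate (i : ℕ)) c
    have h2 : f^[(i : ℕ)] (g^[(j : ℕ)] c) = g^[(j : ℕ) - (i : ℕ)] c := by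
      have h5 : g^[(j : ℕ)] c = g^[(i : ℕ)] (g^[(j : ℕ) - (i : ℕ)] c) := by
        rw [← Function.iterate_add_apply]
        congr 1
        omega
      rw [h5]
      exact (hfg.iterate (i : ℕ)) _
    have h3 : ε0 ≤ dist (f^[(i : ℕ)] (g^[(i : ℕ)] c)) (f^[(i : ℕ)] (g^[(j : ℕ)] c)) := by
      rw [h1, h2, dist_comm]
      exact key _ (by omega)
    exact h3.trans (HpolAux.dist_iterate_le_dynDist f i.isLt _ _)
  intro i j hij
  rcases Nat.lt_or_ge (i : ℕ) (j : ℕ) with h | h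
  · exact main i j h
  · have hne : (i : ℕ) ≠ (j : ℕ) := fun e => hij (Fin.val_injective e)
    have hji : (j : ℕ) < (i : ℕ) := by omega
    rw [HpolAux.dynDist_comm]
    exact main j i hji

end Interval

/-- **Lemma (interval maps with no interior fixed point).**
Let `I = [a,b]` and `f : I → I` be continuous and increasing with `f(a) = a`,
`f(b) = b` and `f(x) ≠ x` for `x ∈ (a,b)`. Then `h_pol(f) = 1`. -/
theorem hpol_interval_map (a b : ℝ) (hab : a < b)
    (f : Set.Icc a b → Set.Icc a b) (hfc : Continuous f) (hfm : StrictMono f)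
    (hfa : f ⟨a, Set.left_mem_Icc.mpr hab.le⟩ = ⟨a, Set.left_mem_Icc.mpr hab.le⟩)
    (hfb : f ⟨b, Set.right_mem_Icc.mpr hab.le⟩ = ⟨b, Set.right_mem_Icc.mpr hab.le⟩)
    (hfix : ∀ x : Set.Icc a b, a < (x : ℝ) → (x : ℝ) < b → f x ≠ x) :
    hpol f = 1 := by
  have hsurj : Function.Surjective f := HpolAux.f_surj hab f hfc hfa hfb
  set e := StrictMono.orderIsoOfSurjective f hfm hsurj with he
  have hcoe : ⇑e = f := StrictMono.coe_orderIsoOfSurjective f hfm hsurj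
  set g : Set.Icc a b → Set.Icc a b := ⇑e.symm with hg
  have hfg : Function.LeftInverse f g := fun x => by
    rw [hg, ← hcoe]; exact e.apply_symm_apply x
  have hgf : Function.LeftInverse g f := fun x => by
    rw [hg, ← hcoe]; exact e.symm_apply_apply x
  obtain ⟨ε0, hε0, hsep⟩ := HpolAux.exists_dyn_sep hab f hfm g hfg hfix
  -- the covering bound, for every ε
  have hcover : ∀ ε : ℝ, 0 < ε → ∃ C : ℕ, 1 ≤ C ∧ ∀ n : ℕ, 1 ≤ n →
      (coverNum f n Set.univ ε ≤ C * n ∧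
        {m : ℕ | ∃ s : Finset (Set.Icc a b), s.card = m ∧
          (Set.univ : Set (Set.Icc a b)) ⊆
            ⋃ c ∈ s, {y | dynDist f n c y ≤ ε}}.Nonempty) := by
    intro ε hε
    obtain ⟨C, hC, hcov⟩ := HpolAux.exists_dyn_cover hab f hfm g hfg hε
    refine ⟨C, hC, fun n hn => ?_⟩
    obtain ⟨s, hsc, hscov⟩ := hcov n hn
    exact ⟨(HpolAux.coverNum_le_card hscov).trans hsc, ⟨s.card, s, rfl, hscov⟩⟩
  rw [hpol, hpolOn]
  apply le_antisymm
  · apply iSup_le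
    rintro ⟨ε, hε⟩
    obtain ⟨C, hC, hcov⟩ := hcover ε hε
    exact HpolAux.limsup_ratio_le_one _ C hC (fun n hn => (hcov n hn).1)
  · have hεpos : 0 < ε0 / 3 := by linarith
    refine le_iSup_of_le ⟨ε0 / 3, hεpos⟩ ?_
    apply HpolAux.one_le_limsup_ratio
    intro n hn
    obtain ⟨C, hC, hcov⟩ := hcover (ε0 / 3) hεpos
    obtain ⟨w, hw⟩ := hsep n
    apply HpolAux.le_coverNum (hcov n hn).2 w (fun j => Set.mem_univ _)
    intro i j hij
    calc 2 * (ε0 / 3) < ε0 := by linarith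
      _ ≤ dynDist f n (w i) (w j) := hw i j hij
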